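/- The function g_e([z,t]) = a₀(|z|⁴+t²)^{-n/2}, with a₀ = 2^{n-2} Γ(n/2)² / π^{n+1}, satisfies L₀ g_e = 0 on Hₙ \ {e}, where L₀ = -¼ Σⱼ(Xⱼ² + Yⱼ²). -/

import Mathlib

abbrev HR (n : ℕ) := (Fin n → ℝ) × (Fin n → ℝ) × ℝ

noncomputable def eX {n : ℕ} (j : Fin n) : HR n := (Pi.single j 1, 0, 0)
noncomputable def eY {n : ℕ} (j : Fin n) : HR n := (0, Pi.single j 1, 0)
noncomputable def eT {n : ℕ} : HR n := (0, 0, 1)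

noncomputable def X {n : ℕ} (j : Fin n) (f : HR n → ℝ) (p : HR n) : ℝ :=
  fderiv ℝ f p (eX j) + 2 * p.2.1 j * fderiv ℝ f p eT

noncomputable def Y {n : ℕ} (j : Fin n) (f : HR n → ℝ) (p : HR n) : ℝ :=
  fderiv ℝ f p (eY j) - 2 * p.1 j * fderiv ℝ f p eT

/-- The sub-Laplacian L₀ = -¼ Σⱼ (Xⱼ² + Yⱼ²). -/
noncomputable def L0 {n : ℕ} (f : HR n → ℝ) (p : HR n) : ℝ :=
  -(1 / 4) * ∑ j, (X j (X j f) p + Y j (Y j f) p)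

/-- |z|² in real coordinates. -/
noncomputable def qz {n : ℕ} (p : HR n) : ℝ := ∑ j, (p.1 j ^ 2 + p.2.1 j ^ 2)

/-- The normalization constant a₀ = 2^{n-2} Γ(n/2)² / π^{n+1}. -/
noncomputable def a0 (n : ℕ) : ℝ :=
  (2 : ℝ) ^ ((n : ℝ) - 2) * (Real.Gamma ((n : ℝ) / 2)) ^ 2 / Real.pi ^ (n + 1)

/-- The fundamental solution g_e([z,t]) = a₀(|z|⁴+t²)^{-n/2}. -/
noncomputable def ge {n : ℕ} (p : HR n) : ℝ :=
  a0 n * (qz p ^ 2 + p.2.2 ^ 2) ^ (-(n : ℝ) / 2)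

-- auxiliary

noncomputable def Lx {n : ℕ} (j : Fin n) : HR n →L[ℝ] ℝ :=
  (ContinuousLinearMap.proj j).comp (ContinuousLinearMap.fst ℝ _ _)
noncomputable def Ly {n : ℕ} (j : Fin n) : HR n →L[ℝ] ℝ :=
  (ContinuousLinearMap.proj j).comp
    ((ContinuousLinearMap.fst ℝ _ _).comp (ContinuousLinearMap.snd ℝ _ _))
noncomputable def Lt {n : ℕ} : HR n →L[ℝ] ℝ :=
  (ContinuousLinearMap.snd ℝ _ _).comp (ContinuousLinearMap.snd ℝ _ _)

@[simp] lemma Lx_apply {n : ℕ} (j : Fin n) (v : HR n) : Lx j v = v.1 j := rfl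
@[simp] lemma Ly_apply {n : ℕ} (j : Fin n) (v : HR n) : Ly j v = v.2.1 j := rfl
@[simp] lemma Lt_apply {n : ℕ} (v : HR n) : Lt v = v.2.2 := rfl

lemma hx {n : ℕ} (j : Fin n) (q : HR n) :
    HasFDerivAt (fun y : HR n => y.1 j) (Lx j) q := (Lx j).hasFDerivAt
lemma hy {n : ℕ} (j : Fin n) (q : HR n) :
    HasFDerivAt (fun y : HR n => y.2.1 j) (Ly j) q := (Ly j).hasFDerivAt
lemma ht {n : ℕ} (q : HR n) :
    HasFDerivAt (fun y : HR n => y.2.2) (Lt (n := n)) q := Lt.hasFDerivAt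

noncomputable def Dq {n : ℕ} (q : HR n) : HR n →L[ℝ] ℝ :=
  ∑ i, ((q.1 i • Lx i + q.1 i • Lx i) + (q.2.1 i • Ly i + q.2.1 i • Ly i))

lemma hasFDerivAt_qz {n : ℕ} (q : HR n) : HasFDerivAt qz (Dq q) q := by
  have h : HasFDerivAt (fun y : HR n => ∑ i, (y.1 i * y.1 i + y.2.1 i * y.2.1 i)) (Dq q) q :=
    HasFDerivAt.fun_sum fun i _ =>
      ((hx i q).mul (hx i q)).add ((hy i q).mul (hy i q))
  exact h.congr_of_eventuallyEq (Filter.Eventually.of_forall fun y => by simp [qz, pow_two])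

@[simp] lemma Dq_eX {n : ℕ} (q : HR n) (j : Fin n) : Dq q (eX j) = 2 * q.1 j := by
  simp only [Dq, ContinuousLinearMap.sum_apply, ContinuousLinearMap.add_apply,
    ContinuousLinearMap.smul_apply, Lx_apply, Ly_apply, eX, Pi.single_apply, smul_eq_mul]
  simp [mul_ite, Finset.sum_add_distrib, Finset.sum_ite_eq']
  ring
@[simp] lemma Dq_eY {n : ℕ} (q : HR n) (j : Fin n) : Dq q (eY j) = 2 * q.2.1 j := by
  simp only [Dq, ContinuousLinearMap.sum_apply, ContinuousLinearMap.add_apply,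
    ContinuousLinearMap.smul_apply, Lx_apply, Ly_apply, eY, Pi.single_apply, smul_eq_mul]
  simp [mul_ite, Finset.sum_add_distrib, Finset.sum_ite_eq']
  ring
@[simp] lemma Dq_eT {n : ℕ} (q : HR n) : Dq q (eT) = 0 := by
  simp [Dq, eT]

noncomputable def wf {n : ℕ} (p : HR n) : ℝ := qz p ^ 2 + p.2.2 ^ 2

noncomputable def Dw {n : ℕ} (q : HR n) : HR n →L[ℝ] ℝ :=
  (qz q • Dq q + qz q • Dq q) + (q.2.2 • Lt + q.2.2 • Lt)

lemma hasFDerivAt_wf {n : ℕ} (q : HR n) : HasFDerivAt wf (Dw q) q := by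
  have h : HasFDerivAt (fun y : HR n => qz y * qz y + y.2.2 * y.2.2) (Dw q) q :=
    ((hasFDerivAt_qz q).mul (hasFDerivAt_qz q)).add ((ht q).mul (ht q))
  exact h.congr_of_eventuallyEq (Filter.Eventually.of_forall fun y => by simp [wf, pow_two])

lemma wf_pos {n : ℕ} (p : HR n)
    (hp : p ≠ ((0 : Fin n → ℝ), (0 : Fin n → ℝ), (0 : ℝ))) : 0 < wf p := by
  have hqnn : 0 ≤ qz p := Finset.sum_nonneg fun i _ => by positivity
  have hnn : 0 ≤ wf p := by unfold wf; positivity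
  rcases lt_or_eq_of_le hnn with h | h
  · exact h
  exfalso
  have hwf : qz p ^ 2 + p.2.2 ^ 2 = 0 := h.symm
  have hq0 : qz p = 0 := by nlinarith [sq_nonneg (qz p), sq_nonneg p.2.2]
  have ht0 : p.2.2 = 0 := by nlinarith [sq_nonneg (qz p), sq_nonneg p.2.2]
  have hcoord : ∀ j, p.1 j ^ 2 + p.2.1 j ^ 2 = 0 := fun j =>
    (Finset.sum_eq_zero_iff_of_nonneg (fun i _ => by positivity)).mp hq0 j (Finset.mem_univ j)
  apply hp
  refine Prod.ext ?_ (Prod.ext ?_ ht0)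
  · funext j; have := hcoord j
    have : p.1 j = 0 := by nlinarith [sq_nonneg (p.1 j), sq_nonneg (p.2.1 j)]
    simpa using this
  · funext j; have := hcoord j
    have : p.2.1 j = 0 := by nlinarith [sq_nonneg (p.1 j), sq_nonneg (p.2.1 j)]
    simpa using this

lemma continuous_wf {n : ℕ} : Continuous (wf (n := n)) := by
  unfold wf qz
  apply Continuous.add
  · apply Continuous.pow
    apply continuous_finset_sum
    intro i _
    fun_prop
  · fun_prop

lemma hasFDerivAt_ge {n : ℕ} (q : HR n) (hq : wf q ≠ 0) :
    HasFDerivAt (ge (n := n))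
      (a0 n • ((-(n : ℝ) / 2 * wf q ^ (-(n : ℝ) / 2 - 1)) • Dw q)) q :=
  ((hasFDerivAt_wf q).rpow_const (Or.inl hq)).const_mul (a0 n)

noncomputable def Ffun {n : ℕ} (j : Fin n) (q : HR n) : ℝ :=
  (4 * a0 n * (-(n : ℝ) / 2)) *
    (wf q ^ (-(n : ℝ) / 2 - 1) * (qz q * q.1 j + q.2.2 * q.2.1 j))

noncomputable def Gfun {n : ℕ} (j : Fin n) (q : HR n) : ℝ :=
  (4 * a0 n * (-(n : ℝ) / 2)) *
    (wf q ^ (-(n : ℝ) / 2 - 1) * (qz q * q.2.1 j - q.2.2 * q.1 j))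

lemma X_ge_eq {n : ℕ} (j : Fin n) (q : HR n) (hq : wf q ≠ 0) :
    X j (ge (n := n)) q = Ffun j q := by
  rw [X, (hasFDerivAt_ge q hq).fderiv]
  simp only [ContinuousLinearMap.smul_apply, Dw, ContinuousLinearMap.add_apply,
    Dq_eX, Dq_eT, Lt_apply, smul_eq_mul, Ffun]
  simp only [eX, eT]
  ring

lemma Y_ge_eq {n : ℕ} (j : Fin n) (q : HR n) (hq : wf q ≠ 0) :
    Y j (ge (n := n)) q = Gfun j q := by
  rw [Y, (hasFDerivAt_ge q hq).fderiv]
  simp only [ContinuousLinearMap.smul_apply, Dw, ContinuousLinearMap.add_apply,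
    Dq_eY, Dq_eT, Lt_apply, smul_eq_mul, Gfun]
  simp only [eY, eT]
  ring

@[simp] lemma Dw_eX {n : ℕ} (q : HR n) (j : Fin n) : Dw q (eX j) = 4 * (qz q * q.1 j) := by
  simp only [Dw, ContinuousLinearMap.add_apply, ContinuousLinearMap.smul_apply, Dq_eX,
    Lt_apply, smul_eq_mul]
  simp only [eX]
  ring
@[simp] lemma Dw_eY {n : ℕ} (q : HR n) (j : Fin n) : Dw q (eY j) = 4 * (qz q * q.2.1 j) := by
  simp only [Dw, ContinuousLinearMap.add_apply, ContinuousLinearMap.smul_apply, Dq_eY,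
    Lt_apply, smul_eq_mul]
  simp only [eY]
  ring
@[simp] lemma Dw_eT {n : ℕ} (q : HR n) : Dw q eT = 2 * q.2.2 := by
  simp only [Dw, ContinuousLinearMap.add_apply, ContinuousLinearMap.smul_apply, Dq_eT,
    Lt_apply, smul_eq_mul]
  simp only [eT]
  ring

lemma key {n : ℕ} (p : HR n) (hw : wf p ≠ 0) (j : Fin n) :
    X j (X j (ge (n := n))) p + Y j (Y j (ge (n := n))) p
      = (4 * a0 n * (-(n : ℝ) / 2)) * (wf p ^ (-(n : ℝ) / 2 - 1 - 1) * (qz p ^ 2 + p.2.2 ^ 2)) *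
          (2 * qz p + 4 * (-(n : ℝ) / 2) * (p.1 j ^ 2 + p.2.1 j ^ 2)) := by
  have hop : IsOpen {q : HR n | wf q ≠ 0} := isOpen_compl_singleton.preimage continuous_wf
  have hEvX : X j (ge (n := n)) =ᶠ[nhds p] Ffun j := by
    filter_upwards [hop.mem_nhds hw] with q hq using X_ge_eq j q hq
  have hEvY : Y j (ge (n := n)) =ᶠ[nhds p] Gfun j := by
    filter_upwards [hop.mem_nhds hw] with q hq using Y_ge_eq j q hq
  have hfX : fderiv ℝ (X j (ge (n := n))) p = fderiv ℝ (Ffun j) p := hEvX.fderiv_eq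
  have hfY : fderiv ℝ (Y j (ge (n := n))) p = fderiv ℝ (Gfun j) p := hEvY.fderiv_eq
  have hF' : HasFDerivAt (Ffun j) _ p :=
    ((((hasFDerivAt_wf p).rpow_const (Or.inl hw)).mul
      (((hasFDerivAt_qz p).mul (hx j p)).add ((ht p).mul (hy j p)))).const_mul
      (4 * a0 n * (-(n : ℝ) / 2)))
  have hG' : HasFDerivAt (Gfun j) _ p :=
    ((((hasFDerivAt_wf p).rpow_const (Or.inl hw)).mul
      (((hasFDerivAt_qz p).mul (hy j p)).sub ((ht p).mul (hx j p)))).const_mul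
      (4 * a0 n * (-(n : ℝ) / 2)))
  rw [show X j (X j (ge (n := n))) p
        = fderiv ℝ (X j (ge (n := n))) p (eX j)
            + 2 * p.2.1 j * fderiv ℝ (X j (ge (n := n))) p eT from rfl,
      show Y j (Y j (ge (n := n))) p
        = fderiv ℝ (Y j (ge (n := n))) p (eY j)
            - 2 * p.1 j * fderiv ℝ (Y j (ge (n := n))) p eT from rfl,
      hfX, hfY, hF'.fderiv, hG'.fderiv]
  simp only [ContinuousLinearMap.smul_apply, ContinuousLinearMap.add_apply,
    ContinuousLinearMap.sub_apply, Dw_eX, Dw_eY, Dw_eT, Dq_eX, Dq_eY, Dq_eT,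
    Lx_apply, Ly_apply, Lt_apply, smul_eq_mul, Pi.add_apply, Pi.sub_apply, Pi.mul_apply]
  simp only [eX, eY, eT, Pi.single_eq_same, Pi.zero_apply]
  have hpow : wf p ^ (-(n : ℝ) / 2 - 1) = wf p ^ (-(n : ℝ) / 2 - 1 - 1) * wf p := by
    have h2 : (-(n : ℝ) / 2 - 1 - 1) + 1 = -(n : ℝ) / 2 - 1 := by ring
    conv_lhs => rw [← h2]
    rw [Real.rpow_add_one hw]
  rw [hpow]
  simp only [wf]
  ring

/-- g_e is L₀-harmonic away from the identity: L₀ g_e = 0 on Hₙ \ {e}. -/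
theorem fundamental_solution_harmonic (n : ℕ) (p : HR n)
    (hp : p ≠ ((0 : Fin n → ℝ), (0 : Fin n → ℝ), (0 : ℝ))) :
    L0 (ge (n := n)) p = 0 := by
  have hw : wf p ≠ 0 := ne_of_gt (wf_pos p hp)
  have hsum : ∑ j, (X j (X j (ge (n := n))) p + Y j (Y j (ge (n := n))) p) = 0 := by
    rw [Finset.sum_congr rfl fun j _ => key p hw j, ← Finset.mul_sum,
        Finset.sum_add_distrib, Finset.sum_const, ← Finset.mul_sum]
    rw [show ∑ j, (p.1 j ^ 2 + p.2.1 j ^ 2) = qz p from rfl]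
    simp only [Finset.card_univ, Fintype.card_fin, nsmul_eq_mul]
    ring
  simp [L0, hsum]
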